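/- arXiv:2012.05993 — 2 statements merged into one kernel-verified Lean document; each statement's English description precedes it below -/
import Mathlib

section
/- Every nontrivial abelian group admits a nontrivial countable quotient, i.e., there exists a surjective homomorphism from the group onto a nontrivial countable abelian group. -/
theorem nontrivial_abelian_has_nontrivial_countable_quotient
    {A : Type*} [CommGroup A] [Nontrivial A] :
    ∃ N : Subgroup A, Countable (A ⧸ N) ∧ Nontrivial (A ⧸ N) := by
  obtain ⟨a, ha⟩ := exists_ne (1 : A)
  have ha' : Additive.ofMul a ≠ (0 : Additive A) := ha
  obtain ⟨c, hc⟩ := CharacterModule.exists_character_apply_ne_zero_of_ne_zero ha'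
  let f : A →* Multiplicative (AddCircle (1 : ℚ)) :=
    AddMonoidHom.toMultiplicativeRight c
  refine ⟨f.ker, ?_, ?_⟩
  · have h1 : Countable (AddCircle (1 : ℚ)) :=
      (QuotientAddGroup.mk'_surjective (AddSubgroup.zmultiples (1 : ℚ))).countable
    have : Countable (Multiplicative (AddCircle (1 : ℚ))) := h1
    exact Countable.of_equiv _ (QuotientGroup.quotientKerEquivRange f).symm.toEquiv
  · refine ⟨⟨(a : A ⧸ f.ker), 1, ?_⟩⟩
    intro h
    rw [QuotientGroup.eq_one_iff, MonoidHom.mem_ker] at h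
    exact hc (Multiplicative.toAdd.injective h)
end

section
/- If every countable quotient of a group G is trivial (equivalently, every normal subgroup of countable index equals G), then G is perfect, i.e., G equals its commutator subgroup. -/
theorem perfect_of_countable_quotients_trivial
    {G : Type*} [Group G]
    (h : ∀ (N : Subgroup G) [N.Normal], Countable (G ⧸ N) → N = ⊤) :
    commutator G = ⊤ := by
  by_contra hne
  obtain ⟨g, hg⟩ : ∃ g : G, g ∉ commutator G := by
    by_contra hc; push_neg at hc
    exact hne (Subgroup.eq_top_iff' _ |>.2 hc)
  have hg1 : Abelianization.of g ≠ 1 := by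
    intro h1
    exact hg ((QuotientGroup.eq_one_iff g).1 h1)
  have ha : (Additive.ofMul (Abelianization.of g) : Additive (Abelianization G)) ≠ 0 := hg1
  obtain ⟨c, hc⟩ := CharacterModule.exists_character_apply_ne_zero_of_ne_zero ha
  let φ : G →* Multiplicative (AddCircle (1 : ℚ)) :=
    (AddMonoidHom.toMultiplicativeRight (c : Additive (Abelianization G) →+ AddCircle (1 : ℚ))).comp
      Abelianization.of
  have hcount : Countable (G ⧸ φ.ker) := by
    have h1 : Countable (AddCircle (1 : ℚ)) := Quotient.countable
    have h2 : Countable (Multiplicative (AddCircle (1 : ℚ))) := h1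
    exact Countable.of_equiv _ (QuotientGroup.quotientKerEquivRange φ).symm.toEquiv
  have htop := h φ.ker hcount
  have hmem : g ∈ φ.ker := htop ▸ Subgroup.mem_top g
  exact hc hmem
end
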